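/- Let X be as in the piecewise-uniform model (density p_t on [m_t, m_{t+1}], m_t = (tV - v)/T, p_0 = p_T). Then E[(X - (V/T)·⌊(T·X + v)/V⌋)^2] = (∑_{j=0}^{T-1} p_j) · ((V - v)^3 + v^3)/(3T^3), and as a function of v ∈ [0, V] this is minimized uniquely at v = V/2, where also E[X - (V/T)·⌊(T·X + v)/V⌋] = 0. -/

import Mathlib

open MeasureTheory

private lemma sq_shift (a b c : ℝ) :
    ∫ x in a..b, (x - c) ^ 2 = ((b - c) ^ 3 - (a - c) ^ 3) / 3 := by
  rw [show (fun x : ℝ => (x - c) ^ 2) = fun x => (fun y : ℝ => y ^ 2) (x - c) from rfl,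
    intervalIntegral.integral_comp_sub_right (fun y : ℝ => y ^ 2) c, integral_pow]
  norm_num

private lemma lin_shift (a b c : ℝ) :
    ∫ x in a..b, (x - c) = ((b - c) ^ 2 - (a - c) ^ 2) / 2 := by
  rw [show (fun x : ℝ => (x - c)) = fun x => (fun y : ℝ => y) (x - c) from rfl,
    intervalIntegral.integral_comp_sub_right (fun y : ℝ => y) c, integral_id]

private lemma pieces {Ω : Type*} [MeasureSpace Ω] [IsProbabilityMeasure (volume : Measure Ω)]
    (T : ℕ) (m : ℕ → ℝ) (hmono : ∀ t, t ≤ T → m t ≤ m (t + 1))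
    (p : ℕ → ℝ) (hp : ∀ t, 0 < p t)
    (X : Ω → ℝ) (hXm : Measurable X)
    (hlaw : Measure.map X (volume : Measure Ω) =
      volume.withDensity (fun x => ∑ t ∈ Finset.range (T + 1),
        Set.indicator (Set.Ioo (m t) (m (t + 1))) (fun _ => ENNReal.ofReal (p t)) x))
    (f : ℝ → ℝ) (hf : Measurable f)
    (g : ℕ → ℝ → ℝ) (hgc : ∀ t, Continuous (g t))
    (hg : ∀ t, t ≤ T → ∀ x ∈ Set.Ioo (m t) (m (t + 1)), f x = g t x) :
    ∫ ω, f (X ω) = ∑ t ∈ Finset.range (T + 1), p t * ∫ x in (m t)..(m (t + 1)), g t x := by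
  set q : ℝ → NNReal := fun x => ∑ t ∈ Finset.range (T + 1),
    Set.indicator (Set.Ioo (m t) (m (t + 1))) (fun _ => (p t).toNNReal) x with hqdef
  have hq : Measurable q :=
    Finset.measurable_sum _ fun t _ => Measurable.indicator measurable_const measurableSet_Ioo
  have hdens : (fun x => ∑ t ∈ Finset.range (T + 1),
      Set.indicator (Set.Ioo (m t) (m (t + 1))) (fun _ => ENNReal.ofReal (p t)) x)
      = fun x => ((q x : NNReal) : ENNReal) := by
    funext x
    simp only [hqdef, ENNReal.coe_finset_sum]
    refine Finset.sum_congr rfl fun t _ => ?_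
    by_cases hx : x ∈ Set.Ioo (m t) (m (t + 1)) <;>
      simp [hx, ENNReal.ofReal]
  calc ∫ ω, f (X ω) = ∫ x, f x ∂(Measure.map X volume) :=
        (integral_map hXm.aemeasurable hf.aestronglyMeasurable).symm
    _ = ∫ x, f x ∂(volume.withDensity fun x => ((q x : NNReal) : ENNReal)) := by
        rw [hlaw, hdens]
    _ = ∫ x, q x • f x := integral_withDensity_eq_integral_smul hq f
    _ = ∫ x, ∑ t ∈ Finset.range (T + 1),
          Set.indicator (Set.Ioo (m t) (m (t + 1))) (fun y => p t * g t y) x := by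
        congr 1; funext x
        have hc : ((q x : NNReal) : ℝ) = ∑ t ∈ Finset.range (T + 1),
            Set.indicator (Set.Ioo (m t) (m (t + 1))) (fun _ => p t) x := by
          simp only [hqdef, NNReal.coe_sum]
          refine Finset.sum_congr rfl fun t _ => ?_
          by_cases hx : x ∈ Set.Ioo (m t) (m (t + 1)) <;>
            simp [hx, Real.coe_toNNReal _ (hp t).le]
        rw [NNReal.smul_def, smul_eq_mul, hc, Finset.sum_mul]
        refine Finset.sum_congr rfl fun t ht => ?_
        by_cases hx : x ∈ Set.Ioo (m t) (m (t + 1))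
        · simp only [Set.indicator_of_mem hx]
          rw [hg t (Nat.lt_succ_iff.mp (Finset.mem_range.mp ht)) x hx]
        · simp [Set.indicator_of_notMem hx]
    _ = ∑ t ∈ Finset.range (T + 1),
          ∫ x, Set.indicator (Set.Ioo (m t) (m (t + 1))) (fun y => p t * g t y) x := by
        refine integral_finset_sum _ fun t _ => ?_
        have hint : IntegrableOn (fun y => p t * g t y) (Set.Ioo (m t) (m (t + 1))) :=
          ((continuous_const.mul (hgc t)).continuousOn.integrableOn_Icc).mono_set
            Set.Ioo_subset_Icc_self
        exact hint.integrable_indicator measurableSet_Ioo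
    _ = ∑ t ∈ Finset.range (T + 1), p t * ∫ x in (m t)..(m (t + 1)), g t x := by
        refine Finset.sum_congr rfl fun t ht => ?_
        rw [integral_indicator measurableSet_Ioo, ← integral_Ioc_eq_integral_Ioo,
          ← intervalIntegral.integral_of_le (hmono t (Nat.lt_succ_iff.mp (Finset.mem_range.mp ht))),
          intervalIntegral.integral_const_mul]

set_option maxHeartbeats 1000000 in
theorem stmt_18 {Ω : Type*} [MeasureSpace Ω] [IsProbabilityMeasure (volume : Measure Ω)]
    (V : ℝ) (hV : 0 < V) (T : ℕ) (hT : 1 ≤ T) (v : ℝ) (hv : v ∈ Set.Icc 0 V)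
    (m : ℕ → ℝ) (hm0 : m 0 = 0) (hmTop : m (T + 1) = V)
    (hm : ∀ t, 1 ≤ t → t ≤ T → m t = (t * V - v) / T)
    (p : ℕ → ℝ) (hp : ∀ t, 0 < p t) (hp0T : p 0 = p T)
    (X : Ω → ℝ) (hXm : Measurable X)
    (hlaw : Measure.map X (volume : Measure Ω) =
      volume.withDensity (fun x => ∑ t ∈ Finset.range (T + 1),
        Set.indicator (Set.Ioo (m t) (m (t + 1))) (fun _ => ENNReal.ofReal (p t)) x)) :
    (∫ ω : Ω, (X ω - (V / T) * ⌊(T * X ω + v) / V⌋) ^ 2 ∂(volume : Measure Ω)) =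
        (∑ j ∈ Finset.range T, p j) * (((V - v) ^ 3 + v ^ 3) / (3 * T ^ 3)) ∧
      (∀ u ∈ Set.Icc (0 : ℝ) V,
          (∑ j ∈ Finset.range T, p j) * (((V - V / 2) ^ 3 + (V / 2) ^ 3) / (3 * T ^ 3)) ≤
            (∑ j ∈ Finset.range T, p j) * (((V - u) ^ 3 + u ^ 3) / (3 * T ^ 3)) ∧
          ((∑ j ∈ Finset.range T, p j) * (((V - u) ^ 3 + u ^ 3) / (3 * T ^ 3)) =
              (∑ j ∈ Finset.range T, p j) * (((V - V / 2) ^ 3 + (V / 2) ^ 3) / (3 * T ^ 3)) →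
            u = V / 2)) ∧
      (v = V / 2 →
        (∫ ω : Ω, (X ω - (V / T) * ⌊(T * X ω + v) / V⌋) ∂(volume : Measure Ω)) = 0) := by
  obtain ⟨hv0, hvV⟩ := hv
  have hT0 : (0 : ℝ) < T := by exact_mod_cast Nat.pos_of_ne_zero (by omega)
  have hTne : (T : ℝ) ≠ 0 := hT0.ne'
  -- monotonicity of m
  have hmono : ∀ t, t ≤ T → m t ≤ m (t + 1) := by
    intro t ht
    rcases Nat.eq_zero_or_pos t with h0 | h1
    · subst h0
      rw [hm0, hm 1 le_rfl hT]
      apply div_nonneg _ hT0.le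
      push_cast; linarith
    · rcases eq_or_lt_of_le ht with hTt | hlt
      · rw [hm t h1 ht, hTt, hmTop]
        rw [div_le_iff₀ hT0]
        nlinarith
      · rw [hm t h1 ht, hm (t + 1) (by omega) (by omega)]
        rw [div_le_div_iff₀ hT0 hT0]
        push_cast
        nlinarith
  -- floor identification
  have hfloor : ∀ t, t ≤ T → ∀ x ∈ Set.Ioo (m t) (m (t + 1)),
      (⌊(T * x + v) / V⌋ : ℤ) = (t : ℤ) := by
    intro t ht x hx
    obtain ⟨hx1, hx2⟩ := hx
    rw [Int.floor_eq_iff]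
    constructor
    · push_cast
      rw [le_div_iff₀ hV]
      rcases Nat.eq_zero_or_pos t with h0 | h1
      · subst h0
        have hx0 : 0 < x := by rwa [hm0] at hx1
        push_cast
        nlinarith
      · rw [hm t h1 ht, div_lt_iff₀ hT0] at hx1
        nlinarith
    · push_cast
      rw [div_lt_iff₀ hV]
      rcases eq_or_lt_of_le ht with hTt | hlt
      · rw [hTt, hmTop] at hx2
        push_cast [hTt]
        nlinarith
      · rw [hm (t + 1) (by omega) (by omega), lt_div_iff₀ hT0] at hx2
        push_cast at hx2 ⊢
        nlinarith
  have hS : 0 < ∑ j ∈ Finset.range T, p j :=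
    Finset.sum_pos (fun j _ => hp j) (Finset.nonempty_range_iff.mpr (by omega))
  set S := ∑ j ∈ Finset.range T, p j with hSdef
  refine ⟨?_, ?_, ?_⟩
  · -- second moment
    have hfm : Measurable fun x : ℝ => (x - V / T * (⌊(T * x + v) / V⌋ : ℤ)) ^ 2 := by
      apply Measurable.pow_const
      apply measurable_id.sub
      apply Measurable.const_mul
      exact Measurable.comp (measurable_from_top) (((measurable_const.mul measurable_id).add_const v).div_const V |>.floor)
    have hkey := pieces T m hmono p hp X hXm hlaw
      (fun x => (x - V / T * (⌊(T * x + v) / V⌋ : ℤ)) ^ 2) hfm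
      (fun t x => (x - V / T * t) ^ 2)
      (fun t => by continuity)
      (fun t ht x hx => by simp only [hfloor t ht x hx]; push_cast; ring)
    rw [hkey]
    set A := (V - v) ^ 3 / (3 * (T : ℝ) ^ 3) with hA
    set B := v ^ 3 / (3 * (T : ℝ) ^ 3) with hB
    have heval : ∀ t ∈ Finset.range (T + 1),
        p t * ∫ x in (m t)..(m (t + 1)), (x - V / (T : ℝ) * t) ^ 2 =
        p t * (A + B) - (if t = 0 then p 0 * B else 0) - (if t = T then p T * A else 0) := by
      intro t ht
      have ht' : t ≤ T := Nat.lt_succ_iff.mp (Finset.mem_range.mp ht)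
      rw [sq_shift]
      by_cases h0 : t = 0
      · subst h0
        have hTne0 : T ≠ 0 := by omega
        rw [hm0, hm 1 le_rfl hT]
        rw [if_pos rfl, if_neg (show ¬(0 = T) by omega), hA, hB]
        push_cast
        field_simp
        ring
      · by_cases hTt : t = T
        · subst hTt
          rw [hmTop, hm t (by omega) le_rfl]
          rw [if_neg h0, if_pos rfl, hA, hB]
          field_simp
          ring
        · rw [hm t (by omega) ht', hm (t + 1) (by omega) (by omega)]
          rw [if_neg h0, if_neg hTt, hA, hB]
          push_cast
          field_simp
          ring
    rw [Finset.sum_congr rfl heval]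
    rw [Finset.sum_sub_distrib, Finset.sum_sub_distrib, ← Finset.sum_mul]
    rw [Finset.sum_ite_eq' (Finset.range (T + 1)) 0 (fun _ => p 0 * B),
      Finset.sum_ite_eq' (Finset.range (T + 1)) T (fun _ => p T * A)]
    rw [if_pos (Finset.mem_range.mpr (by omega : (0:ℕ) < T + 1)),
      if_pos (Finset.mem_range.mpr (by omega : T < T + 1)),
      Finset.sum_range_succ, ← hSdef]
    have hAB : A + B = ((V - v) ^ 3 + v ^ 3) / (3 * (T : ℝ) ^ 3) := by
      rw [hA, hB, ← add_div]
    rw [← hAB, hp0T]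
    ring
  · -- minimization
    intro u hu
    have h3T : (0 : ℝ) < 3 * (T : ℝ) ^ 3 := by positivity
    have hfmin : (V - V / 2) ^ 3 + (V / 2) ^ 3 ≤ (V - u) ^ 3 + u ^ 3 := by
      nlinarith [mul_nonneg hV.le (sq_nonneg (u - V / 2))]
    constructor
    · apply mul_le_mul_of_nonneg_left _ hS.le
      rw [div_le_div_iff₀ h3T h3T]
      nlinarith [mul_nonneg hV.le (sq_nonneg (u - V / 2))]
    · intro heq
      have h1 : ((V - u) ^ 3 + u ^ 3) / (3 * (T : ℝ) ^ 3) =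
          ((V - V / 2) ^ 3 + (V / 2) ^ 3) / (3 * (T : ℝ) ^ 3) :=
        mul_left_cancel₀ hS.ne' heq
      rw [div_eq_div_iff h3T.ne' h3T.ne'] at h1
      have h2 : (V - u) ^ 3 + u ^ 3 = (V - V / 2) ^ 3 + (V / 2) ^ 3 :=
        mul_right_cancel₀ h3T.ne' h1
      have h3 : (u - V / 2) ^ 2 ≤ 0 := by nlinarith
      have h4 : (u - V / 2) ^ 2 = 0 := le_antisymm h3 (sq_nonneg _)
      have h5 : u - V / 2 = 0 := by
        exact sq_eq_zero_iff.mp h4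
      linarith
  · -- mean zero at v = V/2
    intro hv2
    subst hv2
    have hfm : Measurable fun x : ℝ => x - V / T * (⌊(T * x + V / 2) / V⌋ : ℤ) := by
      apply measurable_id.sub
      apply Measurable.const_mul
      exact Measurable.comp (measurable_from_top) (((measurable_const.mul measurable_id).add_const (V / 2)).div_const V |>.floor)
    have hkey := pieces T m hmono p hp X hXm hlaw
      (fun x => x - V / T * (⌊(T * x + V / 2) / V⌋ : ℤ)) hfm
      (fun t x => x - V / T * t)
      (fun t => by continuity)
      (fun t ht x hx => by simp only [hfloor t ht x hx]; push_cast; ring)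
    rw [hkey]
    set C := V ^ 2 / (8 * (T : ℝ) ^ 2) with hC
    have heval : ∀ t ∈ Finset.range (T + 1),
        p t * ∫ x in (m t)..(m (t + 1)), (x - V / (T : ℝ) * t) =
        (if t = 0 then p 0 * C else 0) - (if t = T then p T * C else 0) := by
      intro t ht
      have ht' : t ≤ T := Nat.lt_succ_iff.mp (Finset.mem_range.mp ht)
      rw [lin_shift]
      by_cases h0 : t = 0
      · subst h0
        have hTne0 : T ≠ 0 := by omega
        rw [hm0, hm 1 le_rfl hT]
        rw [if_pos rfl, if_neg (show ¬(0 = T) by omega), hC]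
        push_cast
        field_simp
        ring
      · by_cases hTt : t = T
        · subst hTt
          rw [hmTop, hm t (by omega) le_rfl]
          rw [if_neg h0, if_pos rfl, hC]
          field_simp
          ring
        · rw [hm t (by omega) ht', hm (t + 1) (by omega) (by omega)]
          rw [if_neg h0, if_neg hTt]
          push_cast
          field_simp
          ring
    rw [Finset.sum_congr rfl heval, Finset.sum_sub_distrib,
      Finset.sum_ite_eq' (Finset.range (T + 1)) 0 (fun _ => p 0 * C),
      Finset.sum_ite_eq' (Finset.range (T + 1)) T (fun _ => p T * C),
      if_pos (Finset.mem_range.mpr (by omega : (0:ℕ) < T + 1)),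
      if_pos (Finset.mem_range.mpr (by omega : T < T + 1)), hp0T]
    ring
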